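/- A completely positive trace-preserving map Φ on M_d(ℂ) has Choi matrix (id ⊗ Φ)(P⁺_d) of Schmidt number at most r if and only if Φ admits a Kraus decomposition Φ(ρ) = ∑_α K_α ρ K_α* in which every Kraus operator K_α has rank at most r. -/

import Mathlib

open Matrix Kronecker BigOperators
open scoped ComplexOrder

/-- ψ ∈ ℂ^d ⊗ ℂ^d (modeled on `Fin d × Fin d`) has Schmidt rank at most k. -/
def schmidtRankLE (d k : ℕ) (ψ : Fin d × Fin d → ℂ) : Prop :=
  ∃ u v : Fin k → Fin d → ℂ, ψ = fun p => ∑ t, u t p.1 * v t p.2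

/-- ρ on ℂ^d ⊗ ℂ^d has Schmidt number at most k. -/
def hasSchmidtNumberLE (d k : ℕ) (ρ : Matrix (Fin d × Fin d) (Fin d × Fin d) ℂ) : Prop :=
  ∃ (n : ℕ) (c : Fin n → ℝ) (ψ : Fin n → (Fin d × Fin d → ℂ)),
    (∀ m, 0 ≤ c m) ∧ (∀ m, schmidtRankLE d k (ψ m)) ∧
    ρ = ∑ m, (c m : ℂ) • Matrix.vecMulVec (ψ m) (star (ψ m))

/-- The ampliation id_n ⊗ Λ of a map Λ on M_d, acting blockwise on
M_n ⊗ M_d ≅ M_{nd}. -/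
def idTensor (n d : ℕ) (Λ : Matrix (Fin d) (Fin d) ℂ → Matrix (Fin d) (Fin d) ℂ)
    (σ : Matrix (Fin n × Fin d) (Fin n × Fin d) ℂ) :
    Matrix (Fin n × Fin d) (Fin n × Fin d) ℂ :=
  Matrix.of fun p q => Λ (Matrix.of fun i j => σ (p.1, i) (q.1, j)) p.2 q.2

/-- Complete positivity: every ampliation id_n ⊗ Φ preserves positive
semidefiniteness. -/
def CompletelyPositive (d : ℕ)
    (Φ : Matrix (Fin d) (Fin d) ℂ →ₗ[ℂ] Matrix (Fin d) (Fin d) ℂ) : Prop :=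
  ∀ n : ℕ, ∀ σ : Matrix (Fin n × Fin d) (Fin n × Fin d) ℂ,
    σ.PosSemidef → (idTensor n d (fun M => Φ M) σ).PosSemidef

/-- The maximally entangled projector P⁺_d, with entries
P⁺ ((i,k),(j,l)) = δ_{ik} δ_{jl} / d. -/
noncomputable def Pplus (d : ℕ) : Matrix (Fin d × Fin d) (Fin d × Fin d) ℂ :=
  Matrix.vecMulVec (fun p => if p.1 = p.2 then ((Real.sqrt d : ℂ))⁻¹ else 0)
    (star fun p : Fin d × Fin d => if p.1 = p.2 then ((Real.sqrt d : ℂ))⁻¹ else 0)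

namespace ChoiAux
open Module

lemma sum_dite_lt {M : Type*} [AddCommMonoid M] {m r : ℕ} (hm : m ≤ r) (g : Fin m → M) :
    (∑ t : Fin r, if h : (t : ℕ) < m then g ⟨t, h⟩ else 0) = ∑ s : Fin m, g s := by
  rw [Fin.sum_univ_eq_sum_range (fun j => if h : j < m then g ⟨j, h⟩ else 0) r,
    ← Finset.sum_subset (Finset.range_subset_range.2 hm)
      (fun j _ hj => dif_neg (by simpa using hj)),
    ← Fin.sum_univ_eq_sum_range (fun j => if h : j < m then g ⟨j, h⟩ else 0) m]
  exact Finset.sum_congr rfl fun s _ => by simp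

lemma rank_factor {d r : ℕ} (K : Matrix (Fin d) (Fin d) ℂ) (hK : K.rank ≤ r) :
    ∃ u v : Fin r → Fin d → ℂ, ∀ k i, K k i = ∑ t, u t i * v t k := by
  set W := LinearMap.range K.mulVecLin with hW
  have hfr : finrank ℂ W ≤ r := hK
  let b := finBasis ℂ W
  refine ⟨fun t i => if h : (t : ℕ) < finrank ℂ W then
      b.repr ⟨K.mulVec (Pi.single i 1), ⟨Pi.single i 1, rfl⟩⟩ ⟨t, h⟩ else 0,
    fun t k => if h : (t : ℕ) < finrank ℂ W then (b ⟨t, h⟩ : Fin d → ℂ) k else 0,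
    fun k i => ?_⟩
  set x : W := ⟨K.mulVec (Pi.single i 1), ⟨Pi.single i 1, rfl⟩⟩ with hx
  have h1 : K k i = (x : Fin d → ℂ) k := by
    simp [hx, Matrix.mulVec_single]
  have h2 : (x : Fin d → ℂ) = ∑ s : Fin (finrank ℂ W), b.repr x s • (b s : Fin d → ℂ) := by
    conv_lhs => rw [← b.sum_repr x]
    push_cast
    simp
  have h3 : (∑ t : Fin r, (if h : (t : ℕ) < finrank ℂ W then b.repr x ⟨t, h⟩ else 0) *
      (if h : (t : ℕ) < finrank ℂ W then (b ⟨t, h⟩ : Fin d → ℂ) k else 0))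
      = ∑ s : Fin (finrank ℂ W), b.repr x s * (b s : Fin d → ℂ) k := by
    rw [← sum_dite_lt hfr (fun s => b.repr x s * (b s : Fin d → ℂ) k)]
    exact Finset.sum_congr rfl fun t _ => by by_cases h : (t : ℕ) < finrank ℂ W <;> simp [h]
  rw [h1, h2]
  simp only [Finset.sum_apply, Pi.smul_apply, smul_eq_mul]
  exact (h3).symm

lemma rank_of_factor {d r : ℕ} (u v : Fin r → Fin d → ℂ) :
    (Matrix.of fun k i : Fin d => ∑ t, u t i * v t k).rank ≤ r := by
  have h : (Matrix.of fun k i : Fin d => ∑ t, u t i * v t k) =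
      (Matrix.of fun k (t : Fin r) => v t k) * (Matrix.of fun (t : Fin r) i => u t i) := by
    ext k i
    simp [Matrix.mul_apply, mul_comm]
  rw [h]
  exact (Matrix.rank_mul_le_left _ _).trans (Matrix.rank_le_width _)

lemma pplus_block {d : ℕ} (i j : Fin d) :
    (Matrix.of fun a b => Pplus d (i, a) (j, b))
      = (d : ℂ)⁻¹ • Matrix.single i j (1 : ℂ) := by
  have hs : ((Real.sqrt d : ℂ))⁻¹ * ((Real.sqrt d : ℂ))⁻¹ = (d : ℂ)⁻¹ := by
    rw [← mul_inv, ← Complex.ofReal_mul, Real.mul_self_sqrt (Nat.cast_nonneg d)]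
    simp
  ext a b
  simp only [Matrix.of_apply, Pplus, vecMulVec_apply, Pi.star_apply, Matrix.smul_apply,
    Matrix.single, Matrix.of_apply, smul_eq_mul]
  by_cases h1 : i = a <;> by_cases h2 : j = b <;>
    simp [h1, h2, star_inv₀, ← Complex.ofReal_natCast, Complex.conj_ofReal, hs]

lemma choi_apply {d : ℕ} (Φ : Matrix (Fin d) (Fin d) ℂ →ₗ[ℂ] Matrix (Fin d) (Fin d) ℂ)
    (i j k l : Fin d) :
    idTensor d d (fun M => Φ M) (Pplus d) (i, k) (j, l)
      = (d : ℂ)⁻¹ * Φ (Matrix.single i j 1) k l := by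
  show Φ (Matrix.of fun a b => Pplus d (i, a) (j, b)) k l = _
  rw [pplus_block, _root_.map_smul]
  simp

lemma map_eq_sum {d : ℕ} (Φ : Matrix (Fin d) (Fin d) ℂ →ₗ[ℂ] Matrix (Fin d) (Fin d) ℂ)
    (ρ : Matrix (Fin d) (Fin d) ℂ) :
    Φ ρ = ∑ i, ∑ j, ρ i j • Φ (Matrix.single i j 1) := by
  conv_lhs => rw [matrix_eq_sum_single ρ]
  rw [map_sum]
  refine Finset.sum_congr rfl fun i _ => ?_
  rw [map_sum]
  refine Finset.sum_congr rfl fun j _ => ?_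
  rw [← _root_.map_smul, smul_single, smul_eq_mul, mul_one]

end ChoiAux

open ChoiAux

/-- a CPT map Φ on M_d has Choi matrix (id ⊗ Φ)(P⁺_d) of Schmidt
number at most r iff Φ admits a Kraus decomposition with all Kraus operators of
rank at most r. -/
theorem choi_schmidtNumber_iff_kraus_rank (d r : ℕ)
    (Φ : Matrix (Fin d) (Fin d) ℂ →ₗ[ℂ] Matrix (Fin d) (Fin d) ℂ)
    (hCP : CompletelyPositive d Φ) (hTP : ∀ ρ, (Φ ρ).trace = ρ.trace) :
    hasSchmidtNumberLE d r (idTensor d d (fun M => Φ M) (Pplus d)) ↔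
    ∃ (n : ℕ) (K : Fin n → Matrix (Fin d) (Fin d) ℂ),
      (∀ α, (K α).rank ≤ r) ∧ ∀ ρ, Φ ρ = ∑ α, K α * ρ * (K α)ᴴ := by
  constructor
  · rintro ⟨n, c, ψ, hc, hr, hC⟩
    refine ⟨n, fun m => Matrix.of fun k i => ((Real.sqrt (d * c m) : ℝ) : ℂ) * ψ m (i, k),
      ?_, ?_⟩
    · intro m
      obtain ⟨u, v, huv⟩ := hr m
      have he : (Matrix.of fun k i => ((Real.sqrt (d * c m) : ℝ) : ℂ) * ψ m (i, k))
          = Matrix.of fun k i : Fin d =>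
              ∑ t, (((Real.sqrt (d * c m) : ℝ) : ℂ) * u t i) * v t k := by
        ext k i
        simp only [Matrix.of_apply, huv, Finset.mul_sum]
        exact Finset.sum_congr rfl fun t _ => by ring
      show (Matrix.of fun k i => ((Real.sqrt (d * c m) : ℝ) : ℂ) * ψ m (i, k)).rank ≤ r
      rw [he]
      exact rank_of_factor _ _
    · intro ρ
      have hCe : ∀ i k j l : Fin d, (d : ℂ)⁻¹ * Φ (Matrix.single i j 1) k l
          = ∑ m, (c m : ℂ) * (ψ m (i, k) * star (ψ m (j, l))) := by
        intro i k j l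
        rw [← choi_apply, hC]
        simp [Matrix.sum_apply, vecMulVec_apply, mul_assoc]
      ext k l
      have hd : (d : ℂ) ≠ 0 := Nat.cast_ne_zero.mpr (Fin.pos k).ne'
      have hE : ∀ i j : Fin d, Φ (Matrix.single i j 1) k l
          = (d : ℂ) * ∑ m, (c m : ℂ) * (ψ m (i, k) * star (ψ m (j, l))) := by
        intro i j
        rw [← hCe i k j l, ← mul_assoc, mul_inv_cancel₀ hd, one_mul]
      have hss : ∀ m, ((Real.sqrt (d * c m) : ℝ) : ℂ) * ((Real.sqrt (d * c m) : ℝ) : ℂ)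
          = (d : ℂ) * (c m : ℂ) := by
        intro m
        rw [← Complex.ofReal_mul, Real.mul_self_sqrt (mul_nonneg (Nat.cast_nonneg d) (hc m))]
        push_cast
        ring
      have hlhs : Φ ρ k l = ∑ i, ∑ m, ∑ j,
          ((d : ℂ) * (c m : ℂ)) * (ψ m (i, k) * (ρ i j * star (ψ m (j, l)))) := by
        rw [map_eq_sum Φ ρ]
        simp only [Matrix.sum_apply, Matrix.smul_apply, smul_eq_mul]
        refine Finset.sum_congr rfl fun i _ => ?_
        rw [Finset.sum_comm]
        refine Finset.sum_congr rfl fun j _ => ?_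
        rw [hE i j, Finset.mul_sum, Finset.mul_sum]
        exact Finset.sum_congr rfl fun m _ => by ring
      rw [hlhs, Finset.sum_comm]
      simp only [Matrix.sum_apply, Matrix.mul_apply, Matrix.conjTranspose_apply,
        Matrix.of_apply]
      refine Finset.sum_congr rfl fun m _ => ?_
      rw [Finset.sum_comm]
      refine Finset.sum_congr rfl fun i _ => ?_
      rw [Finset.sum_mul]
      refine Finset.sum_congr rfl fun j _ => ?_
      simp only [star_mul', Complex.star_def, Complex.conj_ofReal]
      rw [← hss m]
      ring
  · rintro ⟨n, K, hrk, hK⟩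
    refine ⟨n, fun _ => (d : ℝ)⁻¹, fun m p => K m p.2 p.1, fun m => by positivity, ?_, ?_⟩
    · intro m
      obtain ⟨u, v, huv⟩ := rank_factor (K m) (hrk m)
      exact ⟨u, v, funext fun p => huv p.2 p.1⟩
    · ext ⟨i, k⟩ ⟨j, l⟩
      rw [choi_apply, hK, Matrix.sum_apply, Finset.mul_sum, Matrix.sum_apply]
      refine Finset.sum_congr rfl fun m _ => ?_
      have hEmul : ∑ b, (∑ a, K m k a * Matrix.single i j (1:ℂ) a b) * star (K m l b)
          = K m k i * star (K m l j) := by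
        rw [Finset.sum_eq_single j]
        · rw [Finset.sum_eq_single i]
          · simp [Matrix.single]
          · intro a _ ha
            simp [Matrix.single, Ne.symm ha]
          · simp
        · intro b _ hb
          have : ∀ a, K m k a * Matrix.single i j (1:ℂ) a b = 0 := by
            intro a
            simp [Matrix.single, Ne.symm hb]
          simp [this]
        · simp
      have hKE : (K m * Matrix.single i j (1:ℂ) * (K m)ᴴ) k l = K m k i * star (K m l j) := by
        simp only [Matrix.mul_apply, Matrix.conjTranspose_apply]
        exact hEmul
      rw [hKE]
      simp only [Matrix.smul_apply, vecMulVec_apply, Pi.star_apply, smul_eq_mul]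
      push_cast
      ring
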